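/- Let ℓ ≥ 1 be an integer, let g₁, …, g_ℓ : ℝ → ℝ be differentiable functions with everywhere positive derivative, let x ∈ ℝ, and set z₀ = x and z_i = g_i(z_{i−1}) for 1 ≤ i ≤ ℓ. Let a > 0 and 0 < ε < a, and suppose that log((g_ℓ ∘ ⋯ ∘ g₁)'(x)) ≥ a·ℓ. Then there exists an index q with 1 ≤ q ≤ ℓ such that log((g_q ∘ ⋯ ∘ g₁)'(x)) ≥ (a − ε)·ℓ and, for every i with 1 ≤ i ≤ q, log((g_q ∘ ⋯ ∘ g_i)'(z_{i−1})) > (q − i + 1)·ε. -/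

import Mathlib

/-- `compFrom g i k = g_{i+k-1} ∘ ⋯ ∘ g_{i+1} ∘ g_i` is the composition of the `k`
consecutive maps starting at index `i` (the empty composition being the identity). -/
def compFrom (g : ℕ → ℝ → ℝ) (i : ℕ) : ℕ → ℝ → ℝ
  | 0 => id
  | k + 1 => g (i + k) ∘ compFrom g i k

lemma compFrom_split (g : ℕ → ℝ → ℝ) (i m : ℕ) :
    ∀ n, compFrom g i (m + n) = compFrom g (i + m) n ∘ compFrom g i m := by
  intro n
  induction n with
  | zero => rfl
  | succ n ih =>
    show compFrom g i (m + n + 1) = _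
    show g (i + (m + n)) ∘ compFrom g i (m + n) = _
    rw [ih, ← Nat.add_assoc]
    rfl

lemma compFrom_diff_pos (g : ℕ → ℝ → ℝ) (ℓ : ℕ)
    (hdiff : ∀ i : ℕ, 1 ≤ i → i ≤ ℓ → Differentiable ℝ (g i))
    (hpos : ∀ i : ℕ, 1 ≤ i → i ≤ ℓ → ∀ y : ℝ, 0 < deriv (g i) y) :
    ∀ k i, 1 ≤ i → i + k ≤ ℓ + 1 →
      Differentiable ℝ (compFrom g i k) ∧ ∀ y, 0 < deriv (compFrom g i k) y := by
  intro k
  induction k with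
  | zero =>
    intro i _ _
    constructor
    · exact differentiable_id
    · intro y; simp [compFrom]
  | succ k ih =>
    intro i hi hik
    obtain ⟨hd, hp⟩ := ih i hi (by omega)
    have hg : Differentiable ℝ (g (i + k)) := hdiff _ (by omega) (by omega)
    have hderiv : ∀ y, deriv (compFrom g i (k + 1)) y
        = deriv (g (i + k)) (compFrom g i k y) * deriv (compFrom g i k) y := by
      intro y
      show deriv ((g (i + k)) ∘ compFrom g i k) y = _
      exact deriv_comp y (hg.differentiableAt) (hd.differentiableAt)
    constructor
    · exact hg.comp hd
    · intro y
      rw [hderiv y]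
      exact mul_pos (hpos _ (by omega) (by omega) _) (hp y)

/-- If the full composition `g_ℓ ∘ ⋯ ∘ g₁` expands by at least `e^{aℓ}` at `x`, then for
any `0 < ε < a` there is an index `q ≤ ℓ` such that the partial composition
`g_q ∘ ⋯ ∘ g₁` already expands by at least `e^{(a-ε)ℓ}` at `x`, and every suffix
`g_q ∘ ⋯ ∘ g_i` expands by more than `e^{(q-i+1)ε}` at `z_{i-1}`. -/
theorem partial_composition_expansion
    (ℓ : ℕ) (hℓ : 1 ≤ ℓ) (g : ℕ → ℝ → ℝ)
    (hdiff : ∀ i : ℕ, 1 ≤ i → i ≤ ℓ → Differentiable ℝ (g i))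
    (hpos : ∀ i : ℕ, 1 ≤ i → i ≤ ℓ → ∀ y : ℝ, 0 < deriv (g i) y)
    (x : ℝ) (a ε : ℝ) (ha : 0 < a) (hε : 0 < ε) (hεa : ε < a)
    (hexp : a * (ℓ : ℝ) ≤ Real.log (deriv (compFrom g 1 ℓ) x)) :
    ∃ q : ℕ, 1 ≤ q ∧ q ≤ ℓ ∧
      (a - ε) * (ℓ : ℝ) ≤ Real.log (deriv (compFrom g 1 q) x) ∧
      ∀ i : ℕ, 1 ≤ i → i ≤ q →
        ((q - i + 1 : ℕ) : ℝ) * ε <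
          Real.log (deriv (compFrom g i (q - i + 1)) (compFrom g 1 (i - 1) x)) := by
  have key := compFrom_diff_pos g ℓ hdiff hpos
  set s : ℕ → ℝ := fun j => Real.log (deriv (compFrom g 1 j) x) with hs
  -- s 0 = 0
  have hs0 : s 0 = 0 := by simp [hs, compFrom]
  -- log of suffix deriv = s q - s (i-1)
  have hsuffix : ∀ i q : ℕ, 1 ≤ i → i ≤ q → q ≤ ℓ →
      Real.log (deriv (compFrom g i (q - i + 1)) (compFrom g 1 (i - 1) x))
        = s q - s (i - 1) := by
    intro i q hi hiq hqℓ
    have hm : (i - 1) + (q - i + 1) = q := by omega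
    have hsplit : compFrom g 1 q = compFrom g i (q - i + 1) ∘ compFrom g 1 (i - 1) := by
      have := compFrom_split g 1 (i - 1) (q - i + 1)
      rw [hm] at this
      have h1 : 1 + (i - 1) = i := by omega
      rw [h1] at this
      exact this
    obtain ⟨hd1, hp1⟩ := key (i - 1) 1 le_rfl (by omega)
    obtain ⟨hd2, hp2⟩ := key (q - i + 1) i hi (by omega)
    have hderiv : deriv (compFrom g 1 q) x
        = deriv (compFrom g i (q - i + 1)) (compFrom g 1 (i - 1) x)
          * deriv (compFrom g 1 (i - 1)) x := by
      rw [hsplit]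
      exact deriv_comp x (hd2.differentiableAt) (hd1.differentiableAt)
    have hA : 0 < deriv (compFrom g i (q - i + 1)) (compFrom g 1 (i - 1) x) := hp2 _
    have hB : 0 < deriv (compFrom g 1 (i - 1)) x := hp1 x
    have : s q = Real.log (deriv (compFrom g i (q - i + 1)) (compFrom g 1 (i - 1) x))
        + s (i - 1) := by
      rw [hs]
      simp only
      rw [hderiv, Real.log_mul (ne_of_gt hA) (ne_of_gt hB)]
    linarith
  -- combinatorial part: minimal maximizer of t j = s j - j * ε
  set t : ℕ → ℝ := fun j => s j - (j : ℝ) * ε with ht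
  have hex : ∃ j, j ≤ ℓ ∧ ∀ j' ≤ ℓ, t j' ≤ t j := by
    obtain ⟨b, hb, hbmax⟩ := Finset.exists_max_image (Finset.range (ℓ + 1)) t
      ⟨0, by simp⟩
    have hb' := Finset.mem_range.mp hb
    refine ⟨b, by omega, fun j' hj' => ?_⟩
    exact hbmax j' (Finset.mem_range.mpr (by omega))
  set q := Nat.find hex with hq
  obtain ⟨hqℓ, hqmax⟩ := Nat.find_spec hex
  have hqmin : ∀ j < q, t j < t q := by
    intro j hj
    have hne := Nat.find_min hex hj
    push_neg at hne
    obtain ⟨j', hj', hlt⟩ := hne (by omega)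
    exact lt_of_lt_of_le hlt (hqmax j' hj')
  -- q ≥ 1
  have hq1 : 1 ≤ q := by
    by_contra h
    have hq0 : q = 0 := by omega
    have h2 : t ℓ ≤ t q := hqmax ℓ le_rfl
    rw [hq0] at h2
    simp only [ht, hs0, Nat.cast_zero, zero_mul, sub_zero] at h2
    have hsl : a * (ℓ : ℝ) ≤ s ℓ := hexp
    have hℓ1 : (1 : ℝ) ≤ (ℓ : ℝ) := by exact_mod_cast hℓ
    nlinarith
  refine ⟨q, hq1, hqℓ, ?_, ?_⟩
  · -- expansion at x
    have h2 : t ℓ ≤ t q := hqmax ℓ le_rfl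
    have hsl : a * (ℓ : ℝ) ≤ s ℓ := hexp
    have hqε : 0 ≤ (q : ℝ) * ε := by positivity
    simp only [ht] at h2
    linarith
  · intro i hi hiq
    rw [hsuffix i q hi hiq hqℓ]
    have hlt := hqmin (i - 1) (by omega)
    simp only [ht] at hlt
    have hcast : ((q - i + 1 : ℕ) : ℝ) = (q : ℝ) - ((i - 1 : ℕ) : ℝ) := by
      have h1 : (q - i + 1 : ℕ) = q - (i - 1) := by omega
      rw [h1]
      have : (i - 1 : ℕ) ≤ q := by omega
      push_cast [this]
      ring
    rw [hcast]
    nlinarith
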